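/- Soundness of the abstract interpretation: for any program P, (i) if P:[] →* e:ρ and e:ρ ⇓ e':ρ' in the environment-based semantics, then e ⇓ e' in the approximate semantics for P; and (ii) if P:[] →* e:ρ and e:ρ → e':ρ', then e → e' in the approximate semantics for P. -/
import Mathlib


/- Untyped λ-expressions. -/
inductive Exp : Type
  | var : String → Exp
  | app : Exp → Exp → Exp
  | lam : String → Exp → Exp
deriving DecidableEq

namespace Exp

/-- Free variables. -/
def fv : Exp → Finset String
  | var x => {x}
  | app e1 e2 => fv e1 ∪ fv e2
  | lam x e => fv e \ {x}

/-- The set of subexpressions of a λ-expression. -/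
def subexp : Exp → Set Exp
  | var x => {var x}
  | app e1 e2 => insert (app e1 e2) (subexp e1 ∪ subexp e2)
  | lam x e => insert (lam x e) (subexp e)

end Exp

/- Values (closures), environments and states of the environment-based
semantics.  An environment is a (partial) map from variable names to values;
a state `e:ρ` pairs an expression with an environment. -/
inductive Val : Type
  | clos : String → Exp → (String → Option Val) → Val

abbrev Env := String → Option Val
abbrev State := Exp × Env

/-- A value `λx.e:ρ` viewed as a state. -/
def Val.toState : Val → State
  | .clos x e ρ => (Exp.lam x e, ρ)

/-- The λ-expression component of a value. -/
def Val.toExp : Val → Exp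
  | .clos x e _ => Exp.lam x e

def Env.update (ρ : Env) (x : String) (v : Val) : Env :=
  fun y => if y = x then some v else ρ y

def Env.empty : Env := fun _ => none
/- Environment-based evaluation `s ⇓ v` and the call relations
`→r` (Operator), `→d` (Operand), `→c` (Call); (Apply) evaluates an
application via its `→c` call. -/
mutual
  inductive EvalE : State → Val → Prop
    | value (x : String) (e : Exp) (ρ : Env) :
        EvalE (Exp.lam x e, ρ) (Val.clos x e ρ)
    | var {ρ : Env} {x : String} {v : Val} :
        ρ x = some v → EvalE (Exp.var x, ρ) v
    | apply {s s' : State} {v : Val} :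
        CallC s s' → EvalE s' v → EvalE s v
  inductive CallC : State → State → Prop
    | call {e1 e2 : Exp} {ρ ρ0 : Env} {x : String} {e0 : Exp} {v2 : Val} :
        EvalE (e1, ρ) (Val.clos x e0 ρ0) → EvalE (e2, ρ) v2 →
        CallC (Exp.app e1 e2, ρ) (e0, Env.update ρ0 x v2)
end

inductive CallR : State → State → Prop
  | oper (e1 e2 : Exp) (ρ : Env) : CallR (Exp.app e1 e2, ρ) (e1, ρ)

inductive CallD : State → State → Prop
  | opnd {e1 : Exp} {ρ : Env} {v1 : Val} (e2 : Exp) :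
      EvalE (e1, ρ) v1 → CallD (Exp.app e1 e2, ρ) (e2, ρ)

/-- The call relation `→` on states is `→r ∪ →d ∪ →c`. -/
def Call (s s' : State) : Prop := CallR s s' ∨ CallD s s' ∨ CallC s s'
/- Approximate evaluation and call rules (abstract interpretation of the
environment semantics with environments removed), relative to a fixed
program `P`. -/
mutual
  inductive EvalA (P : Exp) : Exp → Exp → Prop
    | value (x : String) (e : Exp) : EvalA P (Exp.lam x e) (Exp.lam x e)
    | var {e1 e2 : Exp} {x : String} {e0 v2 : Exp} :
        Exp.app e1 e2 ∈ Exp.subexp P →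
        EvalA P e1 (Exp.lam x e0) → EvalA P e2 v2 →
        EvalA P (Exp.var x) v2
    | apply {a e' v : Exp} : CallAC P a e' → EvalA P e' v → EvalA P a v
  inductive CallAC (P : Exp) : Exp → Exp → Prop
    | call {e1 e2 : Exp} {x : String} {e0 v2 : Exp} :
        EvalA P e1 (Exp.lam x e0) → EvalA P e2 v2 →
        CallAC P (Exp.app e1 e2) e0
end

inductive CallAR (P : Exp) : Exp → Exp → Prop
  | oper (e1 e2 : Exp) : CallAR P (Exp.app e1 e2) e1

inductive CallAD (P : Exp) : Exp → Exp → Prop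
  | opnd (e1 e2 : Exp) : CallAD P (Exp.app e1 e2) e2

/-- The approximate call relation `→` is `→r ∪ →d ∪ →c`. -/
def CallA (P : Exp) (e e' : Exp) : Prop :=
  CallAR P e e' ∨ CallAD P e e' ∨ CallAC P e e'

/- ==================== Auxiliary development ==================== -/

/-- Well-formed values relative to a program `P`. -/
inductive GoodVal (P : Exp) : Val → Prop
  | mk {x : String} {e : Exp} {ρ : Env} :
      Exp.lam x e ∈ P.subexp →
      (∀ y v, ρ y = some v → GoodVal P v) →
      (∀ y v, ρ y = some v → EvalA P (Exp.var y) v.toExp) →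
      GoodVal P (Val.clos x e ρ)

def GoodEnv (P : Exp) (ρ : Env) : Prop :=
  (∀ y v, ρ y = some v → GoodVal P v) ∧
  (∀ y v, ρ y = some v → EvalA P (Exp.var y) v.toExp)

def GoodState (P : Exp) (s : State) : Prop :=
  s.1 ∈ P.subexp ∧ GoodEnv P s.2

lemma Exp.self_mem_subexp (e : Exp) : e ∈ e.subexp := by
  cases e <;> simp [Exp.subexp]

lemma Exp.subexp_trans : ∀ {c a b : Exp}, a ∈ b.subexp → b ∈ c.subexp → a ∈ c.subexp := by
  intro c
  induction c with
  | var x =>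
      intro a b hab hbc
      simp only [Exp.subexp, Set.mem_singleton_iff] at hbc
      subst hbc; exact hab
  | app c1 c2 ih1 ih2 =>
      intro a b hab hbc
      simp only [Exp.subexp, Set.mem_insert_iff, Set.mem_union] at hbc ⊢
      rcases hbc with rfl | h | h
      · simp only [Exp.subexp, Set.mem_insert_iff, Set.mem_union] at hab
        exact hab
      · exact Or.inr (Or.inl (ih1 hab h))
      · exact Or.inr (Or.inr (ih2 hab h))
  | lam x c ih =>
      intro a b hab hbc
      simp only [Exp.subexp, Set.mem_insert_iff] at hbc ⊢
      rcases hbc with rfl | h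
      · simp only [Exp.subexp, Set.mem_insert_iff] at hab
        exact hab
      · exact Or.inr (ih hab h)

lemma app_subexp_left {P e1 e2 : Exp} (h : Exp.app e1 e2 ∈ P.subexp) : e1 ∈ P.subexp :=
  Exp.subexp_trans (b := Exp.app e1 e2)
    (by simp [Exp.subexp, Exp.self_mem_subexp]) h

lemma app_subexp_right {P e1 e2 : Exp} (h : Exp.app e1 e2 ∈ P.subexp) : e2 ∈ P.subexp :=
  Exp.subexp_trans (b := Exp.app e1 e2)
    (by simp [Exp.subexp, Exp.self_mem_subexp]) h

lemma lam_subexp_body {P : Exp} {x : String} {e : Exp}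
    (h : Exp.lam x e ∈ P.subexp) : e ∈ P.subexp :=
  Exp.subexp_trans (b := Exp.lam x e)
    (by simp [Exp.subexp, Exp.self_mem_subexp]) h

/-- Main mutual-induction lemma. -/
lemma sound_main (P : Exp) :
    (∀ s v, EvalE s v → (GoodState P s → EvalA P s.1 v.toExp ∧ GoodVal P v)) ∧
    (∀ s s', CallC s s' → (GoodState P s → CallAC P s.1 s'.1 ∧ GoodState P s')) := by
  have hval : ∀ (x : String) (e : Exp) (ρ : Env),
      GoodState P (Exp.lam x e, ρ) →
      EvalA P (Exp.lam x e, ρ).1 (Val.clos x e ρ).toExp ∧ GoodVal P (Val.clos x e ρ) :=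
    fun x e ρ hs => ⟨EvalA.value x e, GoodVal.mk hs.1 hs.2.1 hs.2.2⟩
  have hvar : ∀ (ρ : Env) (x : String) (v : Val), ρ x = some v →
      GoodState P (Exp.var x, ρ) →
      EvalA P (Exp.var x, ρ).1 v.toExp ∧ GoodVal P v :=
    fun ρ x v hx hs => ⟨hs.2.2 x v hx, hs.2.1 x v hx⟩
  have happ : ∀ (s s' : State) (v : Val),
      (GoodState P s → CallAC P s.1 s'.1 ∧ GoodState P s') →
      (GoodState P s' → EvalA P s'.1 v.toExp ∧ GoodVal P v) →
      GoodState P s → EvalA P s.1 v.toExp ∧ GoodVal P v := by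
    intro s s' v ihc ihe hs
    obtain ⟨hca, hgs⟩ := ihc hs
    obtain ⟨hea, hgv⟩ := ihe hgs
    exact ⟨EvalA.apply hca hea, hgv⟩
  have hcall : ∀ (e1 e2 : Exp) (ρ ρ0 : Env) (x : String) (e0 : Exp) (v2 : Val),
      (GoodState P (e1, ρ) →
        EvalA P (e1, ρ).1 (Val.clos x e0 ρ0).toExp ∧ GoodVal P (Val.clos x e0 ρ0)) →
      (GoodState P (e2, ρ) → EvalA P (e2, ρ).1 v2.toExp ∧ GoodVal P v2) →
      GoodState P (Exp.app e1 e2, ρ) →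
      CallAC P (Exp.app e1 e2, ρ).1 (e0, Env.update ρ0 x v2).1 ∧
        GoodState P (e0, Env.update ρ0 x v2) := by
    intro e1 e2 ρ ρ0 x e0 v2 ih1 ih2 hs
    obtain ⟨hmem, henv⟩ := hs
    obtain ⟨he1a, hgv1⟩ := ih1 ⟨app_subexp_left hmem, henv⟩
    obtain ⟨he2a, hgv2⟩ := ih2 ⟨app_subexp_right hmem, henv⟩
    cases hgv1 with
    | mk hlam hρ0 hρ0e =>
      refine ⟨CallAC.call he1a he2a, lam_subexp_body hlam, ?_, ?_⟩
      · intro y v hy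
        by_cases hyx : y = x
        · subst hyx
          simp only [Env.update, if_pos rfl] at hy
          cases hy; exact hgv2
        · simp only [Env.update, if_neg hyx] at hy
          exact hρ0 y v hy
      · intro y v hy
        by_cases hyx : y = x
        · subst hyx
          simp only [Env.update, if_pos rfl] at hy
          cases hy
          exact EvalA.var hmem he1a he2a
        · simp only [Env.update, if_neg hyx] at hy
          exact hρ0e y v hy
  constructor
  · intro s v h
    exact EvalE.rec
      (motive_1 := fun s v _ => GoodState P s → EvalA P s.1 v.toExp ∧ GoodVal P v)
      (motive_2 := fun s s' _ => GoodState P s → CallAC P s.1 s'.1 ∧ GoodState P s')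
      hval (fun hx => hvar _ _ _ hx) (fun _ _ ihc ihe => happ _ _ _ ihc ihe)
      (fun _ _ ih1 ih2 => hcall _ _ _ _ _ _ _ ih1 ih2) h
  · intro s s' h
    exact CallC.rec
      (motive_1 := fun s v _ => GoodState P s → EvalA P s.1 v.toExp ∧ GoodVal P v)
      (motive_2 := fun s s' _ => GoodState P s → CallAC P s.1 s'.1 ∧ GoodState P s')
      hval (fun hx => hvar _ _ _ hx) (fun _ _ ihc ihe => happ _ _ _ ihc ihe)
      (fun _ _ ih1 ih2 => hcall _ _ _ _ _ _ _ ih1 ih2) h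

lemma good_preserved {P : Exp} {s s' : State} (h : Call s s') (hs : GoodState P s) :
    GoodState P s' := by
  rcases h with h | h | h
  · cases h; exact ⟨app_subexp_left hs.1, hs.2⟩
  · cases h; exact ⟨app_subexp_right hs.1, hs.2⟩
  · exact ((sound_main P).2 _ _ h hs).2

lemma good_reach {P : Exp} {s : State}
    (h : Relation.ReflTransGen Call (P, Env.empty) s) : GoodState P s := by
  induction h with
  | refl =>
      exact ⟨Exp.self_mem_subexp P, fun y v hv => by simp [Env.empty] at hv,
        fun y v hv => by simp [Env.empty] at hv⟩
  | tail _ hstep ih => exact good_preserved hstep ih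

/-- Soundness of the abstract interpretation: every exact (environment-based)
evaluation or call step from a state reachable from `P:[]` is matched by the
approximate semantics. -/
theorem abstract_interpretation_sound (P : Exp) (hP : P.fv = ∅) :
    (∀ (e : Exp) (ρ : Env) (v : Val),
      Relation.ReflTransGen Call (P, Env.empty) (e, ρ) → EvalE (e, ρ) v →
      EvalA P e v.toExp) ∧
    (∀ (e : Exp) (ρ : Env) (e' : Exp) (ρ' : Env),
      Relation.ReflTransGen Call (P, Env.empty) (e, ρ) → Call (e, ρ) (e', ρ') →
      CallA P e e') := by
  constructor
  · intro e ρ v hreach heval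
    exact ((sound_main P).1 _ _ heval (good_reach hreach)).1
  · intro e ρ e' ρ' hreach hcall
    have hgs := good_reach hreach
    rcases hcall with h | h | h
    · cases h; exact Or.inl (CallAR.oper _ _)
    · cases h; exact Or.inr (Or.inl (CallAD.opnd _ _))
    · exact Or.inr (Or.inr ((sound_main P).2 _ _ h hgs).1)
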